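/- arXiv:1605.01068 — 4 statements merged into one kernel-verified Lean document; each statement's English description precedes it below -/
import Mathlib

section
/- Let X_1,…,X_k be independent Poisson random variables with E X_j = 1/j, set S(X) = Σ_{j=1}^k j·X_j, and let L_m(c) be the set of attainable m-tuples of weighted row sums of nonnegative integer matrices with column sums c. For each fixed r ≥ 1 and m ≥ 1 there is a constant C(r,m) with E[|L_m(X)|·S(X)^r] ≤ C(r,m)·k^r·E|L_m(X)|. -/
/-- `Lset m k c` is the set of `m`-tuples `(∑ j, j * x i j)_i` (with `j` ranging over
`1, …, k`) as `x` ranges over `m × k` matrices of nonnegative integers whose `j`-th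
column sums to `c j`. -/
def Lset (m k : ℕ) (c : Fin k → ℕ) : Set (Fin m → ℕ) :=
  {v | ∃ x : Fin m → Fin k → ℕ,
        (∀ j, ∑ i, x i j = c j) ∧ ∀ i, v i = ∑ j, (j.val + 1) * x i j}

/-- The Poisson probability mass function with mean `μ`. -/
noncomputable def poissonP (μ : ℝ) (r : ℕ) : ℝ :=
  Real.exp (-μ) * μ ^ r / r.factorial

/-- The expectation of `f (X 1, …, X k)` where `X 1, …, X k` are independent
Poisson random variables with `E (X j) = 1 / j`.  (The variable indexed by
`j : Fin k` is Poisson with mean `1 / (j + 1)`.) -/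
noncomputable def pexp (k : ℕ) (f : (Fin k → ℕ) → ℝ) : ℝ :=
  ∑' c : Fin k → ℕ, (∏ j : Fin k, poissonP (1 / ((j : ℕ) + 1 : ℝ)) (c j)) * f c

open scoped ENNReal

namespace Stmt12Aux

/-- the Poisson pmf as an `ℝ≥0∞`. -/
noncomputable def pp {k : ℕ} (j : Fin k) (n : ℕ) : ℝ≥0∞ :=
  ENNReal.ofReal (poissonP (1 / ((j : ℕ) + 1 : ℝ)) n)

noncomputable def P (k : ℕ) (c : Fin k → ℕ) : ℝ≥0∞ := ∏ j, pp j (c j)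

def S (k : ℕ) (c : Fin k → ℕ) : ℕ := ∑ j : Fin k, (j.val + 1) * c j

def T {k : ℕ} (j : Fin k) (c : Fin k → ℕ) : Fin k → ℕ :=
  Function.update c j (c j + 1)

lemma poissonP_nonneg {μ : ℝ} (hμ : 0 ≤ μ) (n : ℕ) : 0 ≤ poissonP μ n := by
  unfold poissonP
  positivity

lemma mu_pos {k : ℕ} (j : Fin k) : (0:ℝ) < 1 / ((j : ℕ) + 1 : ℝ) := by positivity

lemma poissonP_succ (μ : ℝ) (n : ℕ) :
    poissonP μ (n + 1) * (n + 1) = μ * poissonP μ n := by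
  unfold poissonP
  rw [pow_succ, Nat.factorial_succ]
  push_cast
  have h1 : ((n : ℝ) + 1) ≠ 0 := by positivity
  have h2 : ((n.factorial : ℝ)) ≠ 0 := by positivity
  field_simp

lemma pp_succ {k : ℕ} (j : Fin k) (n : ℕ) :
    pp j (n + 1) * ((n : ℝ≥0∞) + 1) = ENNReal.ofReal (1 / ((j : ℕ) + 1 : ℝ)) * pp j n := by
  unfold pp
  have hn : ((n : ℝ≥0∞) + 1) = ENNReal.ofReal ((n : ℝ) + 1) := by
    rw [ENNReal.ofReal_add (by positivity) (by norm_num)]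
    simp
  rw [hn, ← ENNReal.ofReal_mul (poissonP_nonneg (mu_pos j).le _),
    ← ENNReal.ofReal_mul (mu_pos j).le]
  congr 1
  exact poissonP_succ _ n

lemma P_T_mul {k : ℕ} (j : Fin k) (c : Fin k → ℕ) :
    P k (T j c) * ((c j : ℝ≥0∞) + 1) = ENNReal.ofReal (1 / ((j : ℕ) + 1 : ℝ)) * P k c := by
  classical
  have hfun : (fun i => pp i (T j c i)) =
      Function.update (fun i => pp i (c i)) j (pp j (c j + 1)) := by
    funext i
    by_cases h : i = j
    · subst h; simp [T]
    · simp [T, Function.update_of_ne h]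
  have h1 : P k (T j c) = pp j (c j + 1) * ∏ i ∈ Finset.univ \ {j}, pp i (c i) := by
    unfold P
    rw [show (∏ i, pp i (T j c i)) = ∏ i, Function.update (fun i => pp i (c i)) j (pp j (c j + 1)) i
        from Finset.prod_congr rfl fun i _ => congrFun hfun i]
    exact Finset.prod_update_of_mem (Finset.mem_univ j) (fun i => pp i (c i)) (pp j (c j + 1))
  have h2 : P k c = pp j (c j) * ∏ i ∈ Finset.univ \ {j}, pp i (c i) := by
    unfold P
    rw [Finset.sdiff_singleton_eq_erase]
    exact (Finset.mul_prod_erase _ _ (Finset.mem_univ j)).symm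
  rw [h1, h2, mul_right_comm, pp_succ, mul_right_comm]
  ring

lemma T_inj {k : ℕ} (j : Fin k) : Function.Injective (T (k := k) j) := by
  classical
  intro a b h
  funext i
  by_cases hi : i = j
  · subst hi
    have := congrFun h i
    simpa [T] using this
  · have := congrFun h i
    simpa [T, Function.update_of_ne hi] using this

lemma tsum_shift {k : ℕ} (j : Fin k) (g : (Fin k → ℕ) → ℝ≥0∞) :
    ∑' c : Fin k → ℕ, P k c * ((c j : ℝ≥0∞) * g c)
      = ENNReal.ofReal (1 / ((j : ℕ) + 1 : ℝ)) * ∑' c : Fin k → ℕ, P k c * g (T j c) := by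
  classical
  rw [← ENNReal.tsum_mul_left]
  have hsupp : Function.support (fun c : Fin k → ℕ => P k c * ((c j : ℝ≥0∞) * g c))
      ⊆ Set.range (T (k := k) j) := by
    intro c hc
    have hcj : c j ≠ 0 := by
      intro h0
      apply hc
      simp [h0]
    refine ⟨Function.update c j (c j - 1), ?_⟩
    funext i
    by_cases hi : i = j
    · subst hi
      simp only [T, Function.update_self]
      omega
    · simp [T, Function.update_of_ne hi]
  rw [← (T_inj j).tsum_eq hsupp]
  refine tsum_congr fun c => ?_
  have hTj : ((T j c j : ℕ) : ℝ≥0∞) = (c j : ℝ≥0∞) + 1 := by simp [T]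
  calc P k (T j c) * ((T j c j : ℝ≥0∞) * g (T j c))
      = (P k (T j c) * ((c j : ℝ≥0∞) + 1)) * g (T j c) := by rw [hTj]; ring
    _ = ENNReal.ofReal (1 / ((j : ℕ) + 1 : ℝ)) * (P k c * g (T j c)) := by
        rw [P_T_mul]; ring

lemma mem_bound {m k : ℕ} {c : Fin k → ℕ} {v : Fin m → ℕ} (hv : v ∈ Lset m k c) (i : Fin m) :
    v i ≤ S k c := by
  obtain ⟨x, hcol, hrow⟩ := hv
  rw [hrow i]
  unfold S
  refine Finset.sum_le_sum fun j _ => ?_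
  have : x i j ≤ c j := by
    rw [← hcol j]
    exact Finset.single_le_sum (f := fun i' => x i' j) (fun i' _ => Nat.zero_le _)
      (Finset.mem_univ i)
  exact Nat.mul_le_mul_left _ this

lemma Lset_finite (m k : ℕ) (c : Fin k → ℕ) : (Lset m k c).Finite := by
  refine Set.Finite.subset (Set.Finite.pi (fun _ : Fin m => Set.finite_Iic (S k c))) ?_
  intro v hv
  intro i _
  exact mem_bound hv i

lemma card_Lset_le (m k : ℕ) (c : Fin k → ℕ) :
    Nat.card (Lset m k c) ≤ (S k c + 1) ^ m := by
  have hinj : Function.Injective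
      (fun v : Lset m k c => (fun i => (⟨v.1 i, Nat.lt_succ_of_le (mem_bound v.2 i)⟩ : Fin (S k c + 1)) : Fin m → Fin (S k c + 1))) := by
    intro v₁ v₂ h
    ext i
    exact congrArg Fin.val (congrFun h i)
  calc Nat.card (Lset m k c) ≤ Nat.card (Fin m → Fin (S k c + 1)) :=
        Nat.card_le_card_of_injective _ hinj
    _ = (S k c + 1) ^ m := by simp [Nat.card_eq_fintype_card]

lemma exists_dec {m k : ℕ} {c : Fin k → ℕ} {j : Fin k} {v : Fin m → ℕ}
    (hv : v ∈ Lset m k (T j c)) :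
    ∃ i : Fin m, (j.val + 1) ≤ v i ∧ Function.update v i (v i - (j.val + 1)) ∈ Lset m k c := by
  classical
  obtain ⟨x, hcol, hrow⟩ := hv
  have hsum : ∑ i, x i j = c j + 1 := by
    rw [hcol j]; simp [T]
  have hex0 : ∃ i₀ : Fin m, x i₀ j ≠ 0 := by
    by_contra hcon
    push_neg at hcon
    have h0 : ∑ i, x i j = 0 := Finset.sum_eq_zero fun i _ => hcon i
    omega
  obtain ⟨i₀, hne⟩ := hex0
  have hx1 : 1 ≤ x i₀ j := Nat.pos_of_ne_zero hne
  have hterm : (j.val + 1) * x i₀ j ≤ v i₀ := by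
    rw [hrow i₀]
    exact Finset.single_le_sum (f := fun j' => (j'.val + 1) * x i₀ j')
      (fun j' _ => Nat.zero_le _) (Finset.mem_univ j)
  have hge : (j.val + 1) ≤ v i₀ := le_trans (Nat.le_mul_of_pos_right _ hx1) hterm
  refine ⟨i₀, hge, ?_⟩
  refine ⟨fun i j' => if i = i₀ ∧ j' = j then x i j' - 1 else x i j', ?_, ?_⟩
  · intro j'
    show (∑ i, (if i = i₀ ∧ j' = j then x i j' - 1 else x i j')) = c j'
    by_cases hj' : j' = j
    · subst hj'
      have h1 : (∑ i, (if i = i₀ ∧ j' = j' then x i j' - 1 else x i j')) + 1 = ∑ i, x i j' := by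
        rw [← Finset.add_sum_erase _ _ (Finset.mem_univ i₀),
            ← Finset.add_sum_erase _ (fun i => x i j') (Finset.mem_univ i₀)]
        have heq : ∑ i ∈ Finset.univ.erase i₀, (if i = i₀ ∧ j' = j' then x i j' - 1 else x i j')
            = ∑ i ∈ Finset.univ.erase i₀, x i j' := by
          refine Finset.sum_congr rfl fun i hi => ?_
          simp [Finset.ne_of_mem_erase hi]
        rw [heq, if_pos ⟨rfl, rfl⟩]
        omega
      omega
    · have heq : ∑ i, (if i = i₀ ∧ j' = j then x i j' - 1 else x i j') = ∑ i, x i j' := by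
        refine Finset.sum_congr rfl fun i _ => ?_
        simp [hj']
      rw [heq, hcol j']
      simp [T, Function.update_of_ne hj']
  · intro i
    show Function.update v i₀ (v i₀ - (j.val + 1)) i
        = ∑ j', (j'.val + 1) * (if i = i₀ ∧ j' = j then x i j' - 1 else x i j')
    by_cases hi : i = i₀
    · rw [hi, Function.update_self]
      have key : (∑ j', (j'.val + 1) * (if i₀ = i₀ ∧ j' = j then x i₀ j' - 1 else x i₀ j'))
          + (j.val + 1) = ∑ j', (j'.val + 1) * x i₀ j' := by
        rw [← Finset.add_sum_erase _ _ (Finset.mem_univ j),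
            ← Finset.add_sum_erase _ (fun j' => (j'.val + 1) * x i₀ j') (Finset.mem_univ j)]
        have heq : ∑ j' ∈ Finset.univ.erase j,
              ((j'.val + 1) * (if i₀ = i₀ ∧ j' = j then x i₀ j' - 1 else x i₀ j'))
            = ∑ j' ∈ Finset.univ.erase j, (j'.val + 1) * x i₀ j' := by
          refine Finset.sum_congr rfl fun j' hj' => ?_
          simp [Finset.ne_of_mem_erase hj']
        rw [heq, if_pos ⟨rfl, rfl⟩]
        have hmul : (j.val + 1) * (x i₀ j - 1) + (j.val + 1) = (j.val + 1) * x i₀ j := by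
          have ha : (x i₀ j - 1) + 1 = x i₀ j := by omega
          calc (j.val + 1) * (x i₀ j - 1) + (j.val + 1)
              = (j.val + 1) * ((x i₀ j - 1) + 1) := by rw [Nat.mul_succ]
            _ = (j.val + 1) * x i₀ j := by rw [ha]
        omega
      rw [← hrow i₀] at key
      omega
    · rw [Function.update_of_ne hi, hrow i]
      refine Finset.sum_congr rfl fun j' _ => ?_
      simp [hi]

lemma card_T_le {m k : ℕ} (j : Fin k) (c : Fin k → ℕ) :
    Nat.card (Lset m k (T j c)) ≤ m * Nat.card (Lset m k c) := by
  classical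
  haveI : Finite (Lset m k c) := (Lset_finite m k c).to_subtype
  have hex : ∃ f : Lset m k (T j c) → Fin m × Lset m k c, Function.Injective f := by
    choose i hge hmem using fun v : Lset m k (T j c) => exists_dec v.2
    refine ⟨fun v => (i v, ⟨_, hmem v⟩), ?_⟩
    intro v₁ v₂ h
    rw [Prod.ext_iff] at h
    obtain ⟨h1, h2⟩ := h
    rw [Subtype.ext_iff] at h2
    simp only at h1 h2
    apply Subtype.ext
    funext i'
    have h2' := congrFun h2 i'
    by_cases hi' : i' = i v₁
    · subst hi'
      rw [Function.update_self, ← h1, Function.update_self] at h2'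
      have a1 := hge v₁
      have a2 := hge v₂
      rw [← h1] at a2
      omega
    · rw [Function.update_of_ne hi', ← h1, Function.update_of_ne hi'] at h2'
      exact h2'
  obtain ⟨f, hf⟩ := hex
  calc Nat.card (Lset m k (T j c)) ≤ Nat.card (Fin m × Lset m k c) :=
        Nat.card_le_card_of_injective f hf
    _ = m * Nat.card (Lset m k c) := by simp [Nat.card_prod]




lemma tsum_pi_prod : ∀ (k : ℕ) (q : Fin k → ℕ → ℝ≥0∞),
    ∑' c : Fin k → ℕ, ∏ j, q j (c j) = ∏ j, ∑' n, q j n := by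
  intro k
  induction k with
  | zero =>
    intro q
    haveI : Unique (Fin 0 → ℕ) := Pi.uniqueOfIsEmpty _
    rw [tsum_eq_single (default : Fin 0 → ℕ) (fun b hb => absurd (Subsingleton.elim b default) hb)]
    simp
  | succ n ih =>
    intro q
    rw [← (Fin.consEquiv (fun _ : Fin (n+1) => ℕ)).tsum_eq (fun c => ∏ j, q j (c j))]
    have hterm : ∀ p : ℕ × (Fin n → ℕ),
        (∏ j, q j ((Fin.consEquiv (fun _ : Fin (n+1) => ℕ)) p j))
          = q 0 p.1 * ∏ j : Fin n, q j.succ (p.2 j) := by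
      intro p
      rw [Fin.prod_univ_succ]
      simp [Fin.consEquiv]
    calc ∑' p : ℕ × (Fin n → ℕ), (fun c => ∏ j, q j (c j)) ((Fin.consEquiv _) p)
        = ∑' p : ℕ × (Fin n → ℕ), q 0 p.1 * ∏ j : Fin n, q j.succ (p.2 j) :=
          tsum_congr hterm
      _ = ∑' (a : ℕ) (b : Fin n → ℕ), q 0 a * ∏ j : Fin n, q j.succ (b j) :=
          ENNReal.tsum_prod'
      _ = (∑' a : ℕ, q 0 a) * ∑' b : Fin n → ℕ, ∏ j : Fin n, q j.succ (b j) := by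
          rw [← ENNReal.tsum_mul_right]
          exact tsum_congr fun a => ENNReal.tsum_mul_left
      _ = (∑' a : ℕ, q 0 a) * ∏ j : Fin n, ∑' n', q j.succ n' := by
          rw [ih (fun j => q j.succ)]
      _ = ∏ j : Fin (n+1), ∑' n', q j n' := by
          rw [Fin.prod_univ_succ]



lemma one_add_sum_le_prod {ι : Type*} (s : Finset ι) (a : ι → ℕ) :
    (∑ i ∈ s, a i) + 1 ≤ ∏ i ∈ s, (a i + 1) := by
  classical
  induction s using Finset.induction_on with
  | empty => simp
  | @insert x s hx ih =>
    rw [Finset.sum_insert hx, Finset.prod_insert hx]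
    have h1 : 1 ≤ ∏ i ∈ s, (a i + 1) := Finset.one_le_prod' fun i _ => by omega
    have h2 : a x ≤ a x * ∏ i ∈ s, (a i + 1) := Nat.le_mul_of_pos_right _ h1
    calc a x + ∑ i ∈ s, a i + 1 ≤ a x + ∏ i ∈ s, (a i + 1) := by omega
      _ ≤ a x * ∏ i ∈ s, (a i + 1) + ∏ i ∈ s, (a i + 1) := by omega
      _ = (a x + 1) * ∏ i ∈ s, (a i + 1) := by ring

lemma poissonP_le (μ : ℝ) (hμ0 : 0 ≤ μ) (hμ1 : μ ≤ 1) (n : ℕ) :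
    poissonP μ n ≤ 1 / n.factorial := by
  unfold poissonP
  have h1 : Real.exp (-μ) ≤ 1 := Real.exp_le_one_iff.mpr (by linarith)
  have h2 : μ ^ n ≤ 1 := pow_le_one₀ hμ0 hμ1
  have h3 : (0:ℝ) < n.factorial := by positivity
  rw [div_le_div_iff₀ (by positivity) h3]
  calc Real.exp (-μ) * μ ^ n * (n.factorial : ℝ) ≤ 1 * 1 * (n.factorial : ℝ) := by
        apply mul_le_mul_of_nonneg_right _ h3.le
        exact mul_le_mul h1 h2 (by positivity) (by norm_num)
    _ = 1 * (n.factorial : ℝ) := by ring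

lemma mu_le_one {k : ℕ} (j : Fin k) : (1 : ℝ) / ((j : ℕ) + 1 : ℝ) ≤ 1 := by
  rw [div_le_one (by positivity)]
  norm_num

lemma B_ne_top (k m : ℕ) (j : Fin k) :
    ∑' n : ℕ, pp j n * ((((j.val + 1) * n + 1 : ℕ)) : ℝ≥0∞) ^ m ≠ ∞ := by
  have hbound : ∀ n : ℕ, pp j n * ((((j.val + 1) * n + 1 : ℕ)) : ℝ≥0∞) ^ m
      ≤ ENNReal.ofReal ((((k * 2 ^ n) ^ m : ℕ) : ℝ) * ((1 : ℝ) / n.factorial)) := by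
    intro n
    have h1 : pp j n ≤ ENNReal.ofReal (1 / n.factorial) :=
      ENNReal.ofReal_le_ofReal (poissonP_le _ (mu_pos j).le (mu_le_one j) n)
    have h2 : ((j.val + 1) * n + 1 : ℕ) ≤ k * 2 ^ n := by
      have hj : j.val + 1 ≤ k := j.2
      have hn : n + 1 ≤ 2 ^ n := Nat.lt_two_pow_self
      calc (j.val + 1) * n + 1 ≤ k * n + k := by
            have := Nat.mul_le_mul_right n hj
            omega
        _ = k * (n + 1) := by ring
        _ ≤ k * 2 ^ n := Nat.mul_le_mul_left _ hn
    have h3 : ((((j.val + 1) * n + 1 : ℕ)) : ℝ≥0∞) ^ m ≤ (((k * 2 ^ n) ^ m : ℕ) : ℝ≥0∞) := by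
      rw [Nat.cast_pow]
      exact pow_le_pow_left' (by exact_mod_cast Nat.cast_le.mpr h2) m
    calc pp j n * ((((j.val + 1) * n + 1 : ℕ)) : ℝ≥0∞) ^ m
        ≤ ENNReal.ofReal (1 / n.factorial) * (((k * 2 ^ n) ^ m : ℕ) : ℝ≥0∞) :=
          mul_le_mul' h1 h3
      _ = ENNReal.ofReal ((((k * 2 ^ n) ^ m : ℕ) : ℝ) * ((1 : ℝ) / n.factorial)) := by
          rw [ENNReal.ofReal_mul (by positivity), ENNReal.ofReal_natCast, mul_comm]
  have hsum : Summable (fun n : ℕ => (((k * 2 ^ n) ^ m : ℕ) : ℝ) * ((1 : ℝ) / n.factorial)) := by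
    have : (fun n : ℕ => (((k * 2 ^ n) ^ m : ℕ) : ℝ) * ((1 : ℝ) / n.factorial))
        = fun n : ℕ => (k : ℝ) ^ m * (((2 : ℝ) ^ m) ^ n / n.factorial) := by
      funext n
      push_cast
      rw [mul_pow, ← pow_mul, ← pow_mul, mul_comm n m]
      ring
    rw [this]
    exact (Real.summable_pow_div_factorial ((2:ℝ) ^ m)).mul_left _
  refine ne_top_of_le_ne_top ?_ (Summable.tsum_le_tsum hbound ENNReal.summable ENNReal.summable)
  rw [← ENNReal.ofReal_tsum_of_nonneg (fun n => by positivity) hsum]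
  exact ENNReal.ofReal_ne_top

lemma EL_ne_top (m k : ℕ) :
    ∑' c : Fin k → ℕ, P k c * (Nat.card (Lset m k c) : ℝ≥0∞) ≠ ∞ := by
  have hbound : ∀ c : Fin k → ℕ, P k c * (Nat.card (Lset m k c) : ℝ≥0∞)
      ≤ ∏ j : Fin k, (pp j (c j) * ((((j.val + 1) * c j + 1 : ℕ)) : ℝ≥0∞) ^ m) := by
    intro c
    have h1 : Nat.card (Lset m k c) ≤ (∏ j : Fin k, ((j.val + 1) * c j + 1)) ^ m := by
      calc Nat.card (Lset m k c) ≤ (S k c + 1) ^ m := card_Lset_le m k c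
        _ ≤ (∏ j : Fin k, ((j.val + 1) * c j + 1)) ^ m :=
            Nat.pow_le_pow_left (one_add_sum_le_prod _ _) m
    have h2 : ((Nat.card (Lset m k c)) : ℝ≥0∞)
        ≤ ∏ j : Fin k, ((((j.val + 1) * c j + 1 : ℕ)) : ℝ≥0∞) ^ m := by
      calc ((Nat.card (Lset m k c)) : ℝ≥0∞)
          ≤ (((∏ j : Fin k, ((j.val + 1) * c j + 1)) ^ m : ℕ) : ℝ≥0∞) :=
            Nat.cast_le.mpr h1
        _ = ∏ j : Fin k, ((((j.val + 1) * c j + 1 : ℕ)) : ℝ≥0∞) ^ m := by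
            push_cast
            rw [← Finset.prod_pow]
    calc P k c * (Nat.card (Lset m k c) : ℝ≥0∞)
        ≤ P k c * ∏ j : Fin k, ((((j.val + 1) * c j + 1 : ℕ)) : ℝ≥0∞) ^ m :=
          mul_le_mul_right h2 _
      _ = ∏ j : Fin k, (pp j (c j) * ((((j.val + 1) * c j + 1 : ℕ)) : ℝ≥0∞) ^ m) := by
          rw [Finset.prod_mul_distrib]; rfl
  refine ne_top_of_le_ne_top ?_ (Summable.tsum_le_tsum hbound ENNReal.summable ENNReal.summable)
  rw [tsum_pi_prod k (fun j n => pp j n * ((((j.val + 1) * n + 1 : ℕ)) : ℝ≥0∞) ^ m)]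
  exact ENNReal.prod_ne_top fun j _ => B_ne_top k m j

noncomputable def Phi (m k r : ℕ) : ℝ≥0∞ :=
  ∑' c : Fin k → ℕ, P k c * ((Nat.card (Lset m k c) : ℝ≥0∞) * ((S k c : ℕ) : ℝ≥0∞) ^ r)

lemma Phi_zero_ne_top (m k : ℕ) : Phi m k 0 ≠ ∞ := by
  have : Phi m k 0 = ∑' c : Fin k → ℕ, P k c * (Nat.card (Lset m k c) : ℝ≥0∞) := by
    unfold Phi
    exact tsum_congr fun c => by rw [pow_zero, mul_one]
  rw [this]
  exact EL_ne_top m k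

lemma S_T {k : ℕ} (j : Fin k) (c : Fin k → ℕ) : S k (T j c) = S k c + (j.val + 1) := by
  classical
  have hfun : (fun i : Fin k => (i.val + 1) * (T j c i)) =
      Function.update (fun i : Fin k => (i.val + 1) * c i) j ((j.val + 1) * (c j + 1)) := by
    funext i
    by_cases h : i = j
    · subst h; simp [T]
    · simp [T, Function.update_of_ne h]
  have h1 : S k (T j c) = (j.val + 1) * (c j + 1) + ∑ i ∈ Finset.univ \ {j}, (i.val + 1) * c i := by
    unfold S
    rw [show (∑ i : Fin k, (i.val + 1) * (T j c i))
        = ∑ i : Fin k, Function.update (fun i : Fin k => (i.val + 1) * c i) j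
            ((j.val + 1) * (c j + 1)) i
      from Finset.sum_congr rfl fun i _ => congrFun hfun i]
    exact Finset.sum_update_of_mem (Finset.mem_univ j) _ _
  have h2 : S k c = (j.val + 1) * c j + ∑ i ∈ Finset.univ \ {j}, (i.val + 1) * c i := by
    unfold S
    rw [Finset.sdiff_singleton_eq_erase]
    exact (Finset.add_sum_erase _ _ (Finset.mem_univ j)).symm
  rw [h1, h2, Nat.mul_succ]
  ring

lemma two_pow_bound (a b : ℝ≥0∞) (n : ℕ) : (a + b) ^ n ≤ 2 ^ n * (a ^ n + b ^ n) := by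
  rcases le_total a b with h | h
  · calc (a + b) ^ n ≤ (2 * b) ^ n := pow_le_pow_left' (by
        calc a + b ≤ b + b := add_le_add_left h b
          _ = 2 * b := (two_mul b).symm) n
      _ = 2 ^ n * b ^ n := mul_pow 2 b n
      _ ≤ 2 ^ n * (a ^ n + b ^ n) := mul_le_mul_right le_add_self _
  · calc (a + b) ^ n ≤ (2 * a) ^ n := pow_le_pow_left' (by
        calc a + b ≤ a + a := add_le_add_right h a
          _ = 2 * a := (two_mul a).symm) n
      _ = 2 ^ n * a ^ n := mul_pow 2 a n
      _ ≤ 2 ^ n * (a ^ n + b ^ n) := mul_le_mul_right le_self_add _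

lemma Phi_step (m k r : ℕ) :
    Phi m k (r + 1) ≤ (k : ℝ≥0∞) * m * (2 ^ r * Phi m k r + 2 ^ r * (k : ℝ≥0∞) ^ r * Phi m k 0) := by
  classical
  set L : (Fin k → ℕ) → ℝ≥0∞ := fun c => (Nat.card (Lset m k c) : ℝ≥0∞) with hL
  set g : (Fin k → ℕ) → ℝ≥0∞ := fun c => L c * ((S k c : ℕ) : ℝ≥0∞) ^ r with hg
  have hterm : ∀ c : Fin k → ℕ,
      P k c * (L c * ((S k c : ℕ) : ℝ≥0∞) ^ (r + 1))
        = ∑ j : Fin k, ((j.val : ℝ≥0∞) + 1) * (P k c * ((c j : ℝ≥0∞) * g c)) := by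
    intro c
    have hS : ((S k c : ℕ) : ℝ≥0∞) = ∑ j : Fin k, ((j.val : ℝ≥0∞) + 1) * (c j : ℝ≥0∞) := by
      unfold Stmt12Aux.S
      push_cast
      rfl
    calc P k c * (L c * ((S k c : ℕ) : ℝ≥0∞) ^ (r + 1))
        = ((S k c : ℕ) : ℝ≥0∞) * (P k c * g c) := by rw [hg, pow_succ]; ring
      _ = ∑ j : Fin k, (((j.val : ℝ≥0∞) + 1) * (c j : ℝ≥0∞)) * (P k c * g c) := by
          rw [hS, Finset.sum_mul]
      _ = ∑ j : Fin k, ((j.val : ℝ≥0∞) + 1) * (P k c * ((c j : ℝ≥0∞) * g c)) := by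
          exact Finset.sum_congr rfl fun j _ => by ring
  have hswap : Phi m k (r + 1)
      = ∑ j : Fin k, ∑' c : Fin k → ℕ, ((j.val : ℝ≥0∞) + 1) * (P k c * ((c j : ℝ≥0∞) * g c)) := by
    unfold Phi
    rw [tsum_congr hterm]
    exact Summable.tsum_finsetSum fun j _ => ENNReal.summable
  have hone : ∀ j : Fin k, ((j.val : ℝ≥0∞) + 1) * ENNReal.ofReal (1 / ((j : ℕ) + 1 : ℝ)) = 1 := by
    intro j
    have h1 : ((j.val : ℝ≥0∞) + 1) = ENNReal.ofReal ((j.val : ℝ) + 1) := by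
      rw [ENNReal.ofReal_add (by positivity) (by norm_num)]
      simp
    rw [h1, ← ENNReal.ofReal_mul (by positivity), mul_one_div_cancel (by positivity), ENNReal.ofReal_one]
  have hjb : ∀ j : Fin k, ∑' c : Fin k → ℕ, ((j.val : ℝ≥0∞) + 1) * (P k c * ((c j : ℝ≥0∞) * g c))
      ≤ (m : ℝ≥0∞) * ∑' c : Fin k → ℕ, P k c * (L c * (((S k c : ℕ) : ℝ≥0∞) + k) ^ r) := by
    intro j
    rw [ENNReal.tsum_mul_left, tsum_shift j g, ← mul_assoc, hone j, one_mul]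
    rw [← ENNReal.tsum_mul_left]
    refine Summable.tsum_le_tsum (fun c => ?_) ENNReal.summable ENNReal.summable
    have hLT : L (T j c) ≤ (m : ℝ≥0∞) * L c := by
      rw [hL]
      calc ((Nat.card (Lset m k (T j c)) : ℕ) : ℝ≥0∞)
          ≤ ((m * Nat.card (Lset m k c) : ℕ) : ℝ≥0∞) := Nat.cast_le.mpr (card_T_le j c)
        _ = (m : ℝ≥0∞) * (Nat.card (Lset m k c) : ℝ≥0∞) := by push_cast; rfl
    have hST : ((S k (T j c) : ℕ) : ℝ≥0∞) ≤ ((S k c : ℕ) : ℝ≥0∞) + (k : ℝ≥0∞) := by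
      have : S k (T j c) ≤ S k c + k := by
        rw [S_T j c]
        have := j.2
        omega
      calc ((S k (T j c) : ℕ) : ℝ≥0∞) ≤ ((S k c + k : ℕ) : ℝ≥0∞) := Nat.cast_le.mpr this
        _ = ((S k c : ℕ) : ℝ≥0∞) + (k : ℝ≥0∞) := by push_cast; rfl
    have : g (T j c) ≤ (m : ℝ≥0∞) * (L c * (((S k c : ℕ) : ℝ≥0∞) + k) ^ r) := by
      rw [hg]
      calc L (T j c) * ((S k (T j c) : ℕ) : ℝ≥0∞) ^ r
          ≤ ((m : ℝ≥0∞) * L c) * (((S k c : ℕ) : ℝ≥0∞) + k) ^ r :=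
            mul_le_mul' hLT (pow_le_pow_left' hST r)
        _ = (m : ℝ≥0∞) * (L c * (((S k c : ℕ) : ℝ≥0∞) + k) ^ r) := by ring
    calc P k c * g (T j c) ≤ P k c * ((m : ℝ≥0∞) * (L c * (((S k c : ℕ) : ℝ≥0∞) + k) ^ r)) :=
          mul_le_mul_right this _
      _ = (m : ℝ≥0∞) * (P k c * (L c * (((S k c : ℕ) : ℝ≥0∞) + k) ^ r)) := by ring
  have hPsi : ∑' c : Fin k → ℕ, P k c * (L c * (((S k c : ℕ) : ℝ≥0∞) + k) ^ r)
      ≤ 2 ^ r * Phi m k r + 2 ^ r * (k : ℝ≥0∞) ^ r * Phi m k 0 := by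
    have hb : ∀ c : Fin k → ℕ, P k c * (L c * (((S k c : ℕ) : ℝ≥0∞) + k) ^ r)
        ≤ 2 ^ r * (P k c * (L c * ((S k c : ℕ) : ℝ≥0∞) ^ r))
          + 2 ^ r * (k : ℝ≥0∞) ^ r * (P k c * (L c * ((S k c : ℕ) : ℝ≥0∞) ^ 0)) := by
      intro c
      have h1 : (((S k c : ℕ) : ℝ≥0∞) + k) ^ r
          ≤ 2 ^ r * (((S k c : ℕ) : ℝ≥0∞) ^ r + (k : ℝ≥0∞) ^ r) := two_pow_bound _ _ r
      calc P k c * (L c * (((S k c : ℕ) : ℝ≥0∞) + k) ^ r)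
          ≤ P k c * (L c * (2 ^ r * (((S k c : ℕ) : ℝ≥0∞) ^ r + (k : ℝ≥0∞) ^ r))) := by
            exact mul_le_mul_right (mul_le_mul_right h1 _) _
        _ = 2 ^ r * (P k c * (L c * ((S k c : ℕ) : ℝ≥0∞) ^ r))
              + 2 ^ r * (k : ℝ≥0∞) ^ r * (P k c * (L c * ((S k c : ℕ) : ℝ≥0∞) ^ 0)) := by
            rw [pow_zero]
            ring
    calc ∑' c : Fin k → ℕ, P k c * (L c * (((S k c : ℕ) : ℝ≥0∞) + k) ^ r)
        ≤ ∑' c : Fin k → ℕ, (2 ^ r * (P k c * (L c * ((S k c : ℕ) : ℝ≥0∞) ^ r))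
            + 2 ^ r * (k : ℝ≥0∞) ^ r * (P k c * (L c * ((S k c : ℕ) : ℝ≥0∞) ^ 0))) :=
          Summable.tsum_le_tsum hb ENNReal.summable ENNReal.summable
      _ = 2 ^ r * Phi m k r + 2 ^ r * (k : ℝ≥0∞) ^ r * Phi m k 0 := by
          rw [ENNReal.tsum_add, ENNReal.tsum_mul_left, ENNReal.tsum_mul_left]
          rfl
  calc Phi m k (r + 1)
      = ∑ j : Fin k, ∑' c : Fin k → ℕ, ((j.val : ℝ≥0∞) + 1) * (P k c * ((c j : ℝ≥0∞) * g c)) :=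
        hswap
    _ ≤ ∑ j : Fin k, (m : ℝ≥0∞) * ∑' c : Fin k → ℕ, P k c * (L c * (((S k c : ℕ) : ℝ≥0∞) + k) ^ r) :=
        Finset.sum_le_sum fun j _ => hjb j
    _ = (k : ℝ≥0∞) * ((m : ℝ≥0∞) * ∑' c : Fin k → ℕ, P k c * (L c * (((S k c : ℕ) : ℝ≥0∞) + k) ^ r)) := by
        rw [Finset.sum_const, Finset.card_univ, Fintype.card_fin, nsmul_eq_mul]
    _ ≤ (k : ℝ≥0∞) * ((m : ℝ≥0∞) * (2 ^ r * Phi m k r + 2 ^ r * (k : ℝ≥0∞) ^ r * Phi m k 0)) := by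
        exact mul_le_mul_right (mul_le_mul_right hPsi _) _
    _ = (k : ℝ≥0∞) * m * (2 ^ r * Phi m k r + 2 ^ r * (k : ℝ≥0∞) ^ r * Phi m k 0) := by ring

def Cn (m : ℕ) : ℕ → ℕ
  | 0 => 1
  | r + 1 => m * 2 ^ r * (Cn m r + 1)

lemma Cn_pos (m : ℕ) (hm : 1 ≤ m) : ∀ r, 0 < Cn m r
  | 0 => Nat.one_pos
  | r + 1 => by
    have := Cn_pos m hm r
    have h2 : 0 < 2 ^ r := Nat.pow_pos (by norm_num)
    unfold Cn
    positivity

lemma Phi_le (m k r : ℕ) : Phi m k r ≤ (Cn m r : ℝ≥0∞) * (k : ℝ≥0∞) ^ r * Phi m k 0 := by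
  induction r with
  | zero => simp [Cn]
  | succ r ih =>
    calc Phi m k (r + 1)
        ≤ (k : ℝ≥0∞) * m * (2 ^ r * Phi m k r + 2 ^ r * (k : ℝ≥0∞) ^ r * Phi m k 0) :=
          Phi_step m k r
      _ ≤ (k : ℝ≥0∞) * m * (2 ^ r * ((Cn m r : ℝ≥0∞) * (k : ℝ≥0∞) ^ r * Phi m k 0)
            + 2 ^ r * (k : ℝ≥0∞) ^ r * Phi m k 0) := by
          refine mul_le_mul_right (add_le_add_left (mul_le_mul_right ih _) _) _
      _ = (Cn m (r + 1) : ℝ≥0∞) * (k : ℝ≥0∞) ^ (r + 1) * Phi m k 0 := by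
          show _ = ((m * 2 ^ r * (Cn m r + 1) : ℕ) : ℝ≥0∞) * _ * _
          push_cast
          ring

lemma P_ne_top (k : ℕ) (c : Fin k → ℕ) : P k c ≠ ∞ :=
  ENNReal.prod_ne_top fun j _ => ENNReal.ofReal_ne_top

lemma P_toReal (k : ℕ) (c : Fin k → ℕ) :
    (P k c).toReal = ∏ j : Fin k, poissonP (1 / ((j : ℕ) + 1 : ℝ)) (c j) := by
  unfold P
  rw [ENNReal.toReal_prod]
  exact Finset.prod_congr rfl fun j _ =>
    ENNReal.toReal_ofReal (poissonP_nonneg (mu_pos j).le _)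

lemma pexp_eq (k : ℕ) (f : (Fin k → ℕ) → ℝ) (F : (Fin k → ℕ) → ℝ≥0∞)
    (h : ∀ c, f c = (F c).toReal) (hF : ∀ c, F c ≠ ∞) :
    pexp k f = (∑' c : Fin k → ℕ, P k c * F c).toReal := by
  rw [ENNReal.tsum_toReal_eq (fun c => ENNReal.mul_ne_top (P_ne_top k c) (hF c))]
  unfold pexp
  refine tsum_congr fun c => ?_
  rw [ENNReal.toReal_mul, h c, P_toReal]

end Stmt12Aux

theorem stmt_12 (r m : ℕ) (hr : 1 ≤ r) (hm : 1 ≤ m) :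
    ∃ C : ℝ, 0 < C ∧ ∀ k : ℕ, 1 ≤ k →
      pexp k (fun c => (Nat.card (Lset m k c) : ℝ) *
          (∑ j : Fin k, ((j : ℕ) + 1 : ℝ) * c j) ^ r) ≤
        C * (k : ℝ) ^ r * pexp k (fun c => (Nat.card (Lset m k c) : ℝ)) := by
  refine ⟨(Stmt12Aux.Cn m r : ℝ), by exact_mod_cast Stmt12Aux.Cn_pos m hm r, ?_⟩
  intro k hk
  have hRHS : pexp k (fun c => (Nat.card (Lset m k c) : ℝ)) = (Stmt12Aux.Phi m k 0).toReal := by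
    refine Stmt12Aux.pexp_eq k _ (fun c => (Nat.card (Lset m k c) : ℝ≥0∞) * ((Stmt12Aux.S k c : ℕ) : ℝ≥0∞) ^ 0)
      (fun c => ?_) (fun c => ?_)
    · simp only [pow_zero, mul_one, ENNReal.toReal_natCast]
    · simp only [pow_zero, mul_one]; exact ENNReal.natCast_ne_top _
  have hLHS : pexp k (fun c => (Nat.card (Lset m k c) : ℝ) *
      (∑ j : Fin k, ((j : ℕ) + 1 : ℝ) * c j) ^ r) = (Stmt12Aux.Phi m k r).toReal := by
    refine Stmt12Aux.pexp_eq k _ (fun c => (Nat.card (Lset m k c) : ℝ≥0∞) * ((Stmt12Aux.S k c : ℕ) : ℝ≥0∞) ^ r)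
      (fun c => ?_) (fun c => ?_)
    · simp only [ENNReal.toReal_mul, ENNReal.toReal_pow, ENNReal.toReal_natCast]
      congr 2
      unfold Stmt12Aux.S
      push_cast
      rfl
    · exact ENNReal.mul_ne_top (ENNReal.natCast_ne_top _)
        (ENNReal.pow_ne_top (ENNReal.natCast_ne_top _))
  rw [hLHS, hRHS]
  have hfin : (Stmt12Aux.Cn m r : ℝ≥0∞) * (k : ℝ≥0∞) ^ r * Stmt12Aux.Phi m k 0 ≠ ∞ :=
    ENNReal.mul_ne_top (ENNReal.mul_ne_top (ENNReal.natCast_ne_top _)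
      (ENNReal.pow_ne_top (ENNReal.natCast_ne_top _))) (Stmt12Aux.Phi_zero_ne_top m k)
  calc (Stmt12Aux.Phi m k r).toReal ≤ ((Stmt12Aux.Cn m r : ℝ≥0∞) * (k : ℝ≥0∞) ^ r * Stmt12Aux.Phi m k 0).toReal :=
        ENNReal.toReal_mono hfin (Stmt12Aux.Phi_le m k r)
    _ = (Stmt12Aux.Cn m r : ℝ) * (k : ℝ) ^ r * (Stmt12Aux.Phi m k 0).toReal := by
        rw [ENNReal.toReal_mul, ENNReal.toReal_mul, ENNReal.toReal_pow,
          ENNReal.toReal_natCast, ENNReal.toReal_natCast]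
end

section
/- For m ≥ 1 and r ≥ 1, let L*_m(a) for a = (a_1,…,a_r) ∈ N^r be the set of m-tuples (Σ_{j∈P_1} a_j, …, Σ_{j∈P_m} a_j) as (P_1,…,P_m) ranges over ordered partitions of {1,…,r} into m (possibly empty) parts. Then for any 0 ≤ j ≤ r, |L*_m(a)| ≤ (1 + ã_1 + ⋯ + ã_j)^{m-1} · m^{r-j}, where ã_1 ≤ ⋯ ≤ ã_r is the increasing rearrangement of a. -/
/-- `Lstar m r a` is the set of `m`-tuples `(∑_{s ∈ P 1} a s, …, ∑_{s ∈ P m} a s)`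
as `(P 1, …, P m)` ranges over ordered partitions of `{1, …, r}` into `m` possibly
empty parts; such a partition is encoded by a function `P : Fin r → Fin m`. -/
def Lstar (m r : ℕ) (a : Fin r → ℕ) : Set (Fin m → ℕ) :=
  {v | ∃ P : Fin r → Fin m,
        ∀ i, v i = ∑ s ∈ Finset.univ.filter (fun s => P s = i), a s}

theorem stmt_13 (m r : ℕ) (hm : 1 ≤ m) (hr : 1 ≤ r) (a : Fin r → ℕ)
    (j : ℕ) (hj : j ≤ r) :
    Nat.card (Lstar m r a) ≤
      (1 + ∑ i ∈ Finset.univ.filter (fun i : Fin r => (i : ℕ) < j),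
          a (Tuple.sort a i)) ^ (m - 1) * m ^ (r - j) := by
  classical
  set T : Finset (Fin r) :=
    (Finset.univ.filter (fun i : Fin r => (i : ℕ) < j)).image (Tuple.sort a) with hT
  set S : ℕ := ∑ s ∈ T, a s with hS
  have hsum : ∑ i ∈ Finset.univ.filter (fun i : Fin r => (i : ℕ) < j),
      a (Tuple.sort a i) = S := by
    rw [hS, hT, Finset.sum_image (fun x _ y _ h => (Tuple.sort a).injective h)]
  rw [hsum]
  have hfiltercard : (Finset.univ.filter (fun i : Fin r => (i : ℕ) < j)).card = j := by
    have : (Finset.univ.filter (fun i : Fin r => (i : ℕ) < j)) =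
        Finset.univ.image (Fin.castLE hj) := by
      ext i
      simp only [Finset.mem_filter, Finset.mem_univ, true_and, Finset.mem_image]
      constructor
      · intro h; exact ⟨⟨i, h⟩, rfl⟩
      · rintro ⟨k, rfl⟩; exact k.2
    rw [this, Finset.card_image_of_injective _ (Fin.castLE_injective hj), Finset.card_univ,
      Fintype.card_fin]
  have hTcard : T.card = j := by
    rw [hT, Finset.card_image_of_injective _ (Tuple.sort a).injective, hfiltercard]
  have hBcard : Tᶜ.card = r - j := by
    rw [Finset.card_compl, hTcard, Fintype.card_fin]
  set last : Fin m := ⟨m - 1, Nat.sub_lt hm Nat.one_pos⟩ with hlast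
  -- small and big sums
  set sm : (Fin r → Fin m) → Fin m → ℕ :=
    fun P i => ∑ s ∈ T.filter (fun s => P s = i), a s with hsm
  have hsm_le : ∀ P i, sm P i ≤ S := fun P i =>
    Finset.sum_le_sum_of_subset (Finset.filter_subset _ _)
  have hsm_sum : ∀ P : Fin r → Fin m, ∑ i, sm P i = S := fun P =>
    Finset.sum_fiberwise T P a
  have hdecomp : ∀ (P : Fin r → Fin m) (i : Fin m),
      ∑ s ∈ Finset.univ.filter (fun s => P s = i), a s
        = sm P i + ∑ s ∈ Tᶜ.filter (fun s => P s = i), a s := by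
    intro P i
    rw [hsm]
    rw [← Finset.sum_union (Finset.disjoint_filter_filter disjoint_compl_right),
      ← Finset.filter_union, Finset.union_compl]
  -- choice of witnessing partitions
  have hex : ∀ v : ↥(Lstar m r a), ∃ P : Fin r → Fin m,
      ∀ i, (v : Fin m → ℕ) i = ∑ s ∈ Finset.univ.filter (fun s => P s = i), a s :=
    fun v => v.2
  choose P hP using hex
  -- the injection
  let F : ↥(Lstar m r a) → ((↥(Tᶜ) → Fin m) × ({i : Fin m // i ≠ last} → Fin (S + 1))) :=
    fun v => ⟨fun s => P v s, fun i => ⟨sm (P v) i.1, Nat.lt_succ_of_le (hsm_le _ _)⟩⟩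
  have hFinj : Function.Injective F := by
    intro v v' h
    have h1 : ∀ s : Fin r, s ∈ Tᶜ → P v s = P v' s := by
      intro s hs
      exact congrFun (congrArg Prod.fst h) ⟨s, hs⟩
    have h2 : ∀ i : Fin m, i ≠ last → sm (P v) i = sm (P v') i := by
      intro i hi
      exact congrArg Fin.val (congrFun (congrArg Prod.snd h) ⟨i, hi⟩)
    have h2' : ∀ i : Fin m, sm (P v) i = sm (P v') i := by
      intro i
      by_cases hi : i = last
      · subst hi
        have ha : sm (P v) last + ∑ i ∈ Finset.univ.erase last, sm (P v) i = S := by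
          rw [Finset.add_sum_erase _ _ (Finset.mem_univ last), hsm_sum]
        have hb : sm (P v') last + ∑ i ∈ Finset.univ.erase last, sm (P v') i = S := by
          rw [Finset.add_sum_erase _ _ (Finset.mem_univ last), hsm_sum]
        have hc : ∑ i ∈ Finset.univ.erase last, sm (P v) i
            = ∑ i ∈ Finset.univ.erase last, sm (P v') i :=
          Finset.sum_congr rfl fun i hi => h2 i (Finset.ne_of_mem_erase hi)
        omega
      · exact h2 i hi
    have hbig : ∀ i : Fin m, ∑ s ∈ Tᶜ.filter (fun s => P v s = i), a s
        = ∑ s ∈ Tᶜ.filter (fun s => P v' s = i), a s := by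
      intro i
      have : Tᶜ.filter (fun s => P v s = i) = Tᶜ.filter (fun s => P v' s = i) := by
        ext s
        simp only [Finset.mem_filter]
        constructor
        · rintro ⟨hs, hps⟩; exact ⟨hs, (h1 s hs) ▸ hps⟩
        · rintro ⟨hs, hps⟩; exact ⟨hs, (h1 s hs).symm ▸ hps⟩
      rw [this]
    apply Subtype.ext
    funext i
    rw [hP v i, hP v' i, hdecomp, hdecomp, h2' i, hbig i]
  calc Nat.card (Lstar m r a)
      ≤ Nat.card ((↥(Tᶜ) → Fin m) × ({i : Fin m // i ≠ last} → Fin (S + 1))) :=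
        Nat.card_le_card_of_injective F hFinj
    _ = (1 + S) ^ (m - 1) * m ^ (r - j) := by
        rw [Nat.card_eq_fintype_card, Fintype.card_prod, Fintype.card_fun, Fintype.card_fun,
          Fintype.card_fin, Fintype.card_fin, Fintype.card_coe, hBcard,
          Fintype.card_subtype_compl, Fintype.card_subtype_eq, Fintype.card_fin,
          Nat.add_comm 1 S, Nat.mul_comm]
end

section
/- Let m ≥ k ≥ 2 and let π ∈ S_m be a nontrivial permutation acting naturally on the set of k-element subsets of {1,…,m}. Then the number of cycles of the induced permutation on k-sets is at least c(k)·m^{1/2} for some constant c(k) > 0 depending only on k. -/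
/-- The number of cycles of a permutation `σ` of a finite type, counting fixed
points as cycles of length 1: the number of fixed points plus the number of
nontrivial cycles. -/
def numCycles {α : Type*} [Fintype α] [DecidableEq α] (σ : Equiv.Perm α) : ℕ :=
  (Fintype.card α - σ.support.card) + Multiset.card σ.cycleType

/-- The permutation of the `k`-element subsets of `Fin m` induced by a
permutation `π` of `Fin m`, acting via `A ↦ {π a : a ∈ A}`. -/
def inducedOnSets (k : ℕ) {m : ℕ} (π : Equiv.Perm (Fin m)) :
    Equiv.Perm {A : Finset (Fin m) // A.card = k} :=
  (π.finsetCongr).subtypeEquiv (fun A => by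
    simp [Equiv.finsetCongr_apply, Finset.card_map])

open Equiv Equiv.Perm Finset

variable {α : Type*} [Fintype α] [DecidableEq α]

lemma numCycles_eq (σ : Equiv.Perm α) :
    numCycles σ = (Finset.univ.filter fun x => σ x = x).card + σ.cycleFactorsFinset.card := by
  have h1 : (Finset.univ.filter fun x => σ x = x) = σ.supportᶜ := by
    ext x; simp [Equiv.Perm.mem_support]
  rw [numCycles, cycleType_def, Multiset.card_map, h1, Finset.card_compl]
  rfl

lemma sameCycle_invariant {β : Type*} (σ : Equiv.Perm α) (h : α → β)
    (hinv : ∀ x, h (σ x) = h x) {x y : α} (hxy : σ.SameCycle x y) : h x = h y := by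
  obtain ⟨i, hi⟩ := hxy
  have hinv' : ∀ z, h (σ⁻¹ z) = h z := by
    intro z
    conv_rhs => rw [← Equiv.apply_symm_apply σ z]
    exact (hinv (σ⁻¹ z)).symm
  have key : ∀ (i : ℤ) (x : α), h ((σ ^ i) x) = h x := by
    intro i
    induction i using Int.induction_on with
    | zero => intro x; simp
    | succ j ih => intro x; rw [zpow_add_one, Equiv.Perm.mul_apply, ih, hinv]
    | pred j ih => intro x; rw [zpow_sub_one, Equiv.Perm.mul_apply, ih, hinv']
  rw [← hi, key]

lemma invariant_image_le {β : Type*} [DecidableEq β] (σ : Equiv.Perm α) (h : α → β)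
    (hinv : ∀ x, h (σ x) = h x) : (Finset.univ.image h).card ≤ numCycles σ := by
  classical
  rw [numCycles_eq]
  have husplit : (Finset.univ : Finset α) = (Finset.univ.filter fun x => σ x = x) ∪ σ.support := by
    ext x; simp [Equiv.Perm.mem_support]; tauto
  have hsupp : ((σ.support).image h).card ≤ σ.cycleFactorsFinset.card := by
    rcases ((σ.support).image h).eq_empty_or_nonempty with he | ⟨v0, hv0⟩
    · simp [he]
    · set f : Equiv.Perm α → β := fun c =>
        if hc : c.support.Nonempty then h hc.choose else v0 with hf
      apply Finset.card_le_card_of_surjOn f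
      intro v hv
      simp only [Finset.coe_image, Set.mem_image, Finset.mem_coe] at hv
      obtain ⟨x, hx, rfl⟩ := hv
      have hxs : σ x ≠ x := mem_support.mp hx
      refine ⟨σ.cycleOf x, ?_, ?_⟩
      · exact_mod_cast Equiv.Perm.cycleOf_mem_cycleFactorsFinset_iff.mpr hx
      · have hxc : x ∈ (σ.cycleOf x).support :=
          mem_support_cycleOf_iff.mpr ⟨Equiv.Perm.SameCycle.refl _ _, hx⟩
        have hne : (σ.cycleOf x).support.Nonempty := ⟨x, hxc⟩
        have hmin := hne.choose_spec
        have hsc : σ.SameCycle x hne.choose :=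
          (mem_support_cycleOf_iff.mp hmin).1
        rw [hf]
        simp only [hne, dif_pos]
        exact (sameCycle_invariant σ h hinv hsc).symm
  calc (Finset.univ.image h).card
      = (((Finset.univ.filter fun x => σ x = x) ∪ σ.support).image h).card := by rw [← husplit]
    _ = (((Finset.univ.filter fun x => σ x = x)).image h ∪ (σ.support).image h).card := by
        rw [Finset.image_union]
    _ ≤ (((Finset.univ.filter fun x => σ x = x)).image h).card + ((σ.support).image h).card :=
        Finset.card_union_le _ _
    _ ≤ (Finset.univ.filter fun x => σ x = x).card + σ.cycleFactorsFinset.card := by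
        exact Nat.add_le_add Finset.card_image_le hsupp

lemma fix_pow_le (σ : Equiv.Perm α) (n : ℕ) (hn : 1 ≤ n) :
    (Finset.univ.filter fun x => (σ ^ n) x = x).card ≤ n * numCycles σ := by
  classical
  rw [numCycles_eq]
  set F := Finset.univ.filter fun x => (σ ^ n) x = x with hF
  have hsplit : F = (F.filter fun x => σ x = x) ∪ (F.filter fun x => ¬ σ x = x) :=
    (Finset.filter_union_filter_not_eq _ _).symm
  set F2 := F.filter fun x => ¬ σ x = x with hF2
  have h2 : F2.card ≤ n * σ.cycleFactorsFinset.card := by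
    have himg : F2.image σ.cycleOf ⊆ σ.cycleFactorsFinset := by
      intro c hc
      obtain ⟨x, hx, rfl⟩ := Finset.mem_image.mp hc
      have hxs : σ x ≠ x := (Finset.mem_filter.mp hx).2
      exact Equiv.Perm.cycleOf_mem_cycleFactorsFinset_iff.mpr (mem_support.mpr hxs)
    have hfib : ∀ a ∈ F2.image σ.cycleOf, (F2.filter fun x => σ.cycleOf x = a).card ≤ n := by
      intro a ha
      obtain ⟨x0, hx0, rfl⟩ := Finset.mem_image.mp ha
      have hx0s : σ x0 ≠ x0 := (Finset.mem_filter.mp hx0).2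
      have hx0f : (σ ^ n) x0 = x0 :=
        (Finset.mem_filter.mp ((Finset.mem_filter.mp hx0).1)).2
      have hcyc : (σ.cycleOf x0).IsCycle := σ.isCycle_cycleOf hx0s
      have hpow : (σ.cycleOf x0) ^ n = 1 := by
        refine (hcyc.pow_eq_one_iff' (x := x0) ?_).mpr ?_
        · rwa [Equiv.Perm.cycleOf_apply_self]
        · rw [Equiv.Perm.cycleOf_pow_apply_self]; exact hx0f
      have hdvd : orderOf (σ.cycleOf x0) ∣ n := orderOf_dvd_of_pow_eq_one hpow
      have hcard : (σ.cycleOf x0).support.card ≤ n := by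
        rw [← hcyc.orderOf]; exact Nat.le_of_dvd hn hdvd
      refine le_trans (Finset.card_le_card ?_) hcard
      intro x hx
      have hxe : σ.cycleOf x = σ.cycleOf x0 := (Finset.mem_filter.mp hx).2
      have hxs : σ x ≠ x := (Finset.mem_filter.mp ((Finset.mem_filter.mp hx).1)).2
      rw [← hxe]
      exact mem_support_cycleOf_iff.mpr ⟨Equiv.Perm.SameCycle.refl _ _, mem_support.mpr hxs⟩
    calc F2.card ≤ n * (F2.image σ.cycleOf).card := Finset.card_le_mul_card_image _ n hfib
      _ ≤ n * σ.cycleFactorsFinset.card :=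
          Nat.mul_le_mul_left n (Finset.card_le_card himg)
  have h1 : (F.filter fun x => σ x = x).card ≤ (Finset.univ.filter fun x => σ x = x).card := by
    apply Finset.card_le_card
    intro x hx
    simp only [Finset.mem_filter, Finset.mem_univ, true_and] at hx ⊢
    exact hx.2
  calc F.card = ((F.filter fun x => σ x = x) ∪ F2).card := by rw [← hsplit]
    _ ≤ (F.filter fun x => σ x = x).card + F2.card := Finset.card_union_le _ _
    _ ≤ (Finset.univ.filter fun x => σ x = x).card + n * σ.cycleFactorsFinset.card :=
        Nat.add_le_add h1 h2
    _ ≤ n * ((Finset.univ.filter fun x => σ x = x).card + σ.cycleFactorsFinset.card) := by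
        rw [Nat.mul_add]; exact Nat.add_le_add (Nat.le_mul_of_pos_left _ hn) le_rfl



variable {α : Type*} [Fintype α] [DecidableEq α]

/-- The orbit of `a` under `π` as a Finset. -/
def orb (π : Equiv.Perm α) (a : α) : Finset α := insert a (π.cycleOf a).support

lemma mem_orb_self (π : Equiv.Perm α) (a : α) : a ∈ orb π a := Finset.mem_insert_self _ _

lemma orb_of_mem_support (π : Equiv.Perm α) {a : α} (ha : a ∈ π.support) :
    orb π a = (π.cycleOf a).support := by
  have : a ∈ (π.cycleOf a).support :=
    mem_support_cycleOf_iff.mpr ⟨Equiv.Perm.SameCycle.refl _ _, ha⟩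
  rw [orb, Finset.insert_eq_self.mpr this]

lemma orb_of_fixed (π : Equiv.Perm α) {a : α} (ha : π a = a) : orb π a = {a} := by
  rw [orb, (cycleOf_eq_one_iff π).mpr ha]
  simp

lemma orb_apply (π : Equiv.Perm α) (a : α) : orb π (π a) = orb π a := by
  by_cases ha : π a = a
  · rw [ha]
  · have has : a ∈ π.support := mem_support.mpr ha
    have hpas : π a ∈ π.support := by rwa [Equiv.Perm.apply_mem_support]
    rw [orb_of_mem_support π has, orb_of_mem_support π hpas, cycleOf_self_apply]

lemma orb_eq_of_mem (π : Equiv.Perm α) {a b : α} (hb : b ∈ orb π a) : orb π b = orb π a := by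
  rcases Finset.mem_insert.mp hb with rfl | hb'
  · rfl
  · have hsc : π.SameCycle a b := (mem_support_cycleOf_iff.mp hb').1
    have has : a ∈ π.support := (mem_support_cycleOf_iff.mp hb').2
    have hbs : b ∈ π.support := by
      rw [hsc.cycleOf_eq] at hb'
      exact (mem_support_cycleOf_iff.mp hb').2
    rw [orb_of_mem_support π has, orb_of_mem_support π hbs, hsc.cycleOf_eq]

lemma numCycles_le_card_image_orb (π : Equiv.Perm α) :
    numCycles π ≤ (Finset.univ.image (orb π)).card := by
  classical
  rw [numCycles_eq]
  set Fx := (Finset.univ.filter fun x => π x = x) with hFx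
  have hsub : (Fx.image fun x => ({x} : Finset α)) ∪
      (π.cycleFactorsFinset.image fun c => c.support) ⊆ Finset.univ.image (orb π) := by
    intro O hO
    rcases Finset.mem_union.mp hO with h | h
    · obtain ⟨x, hx, rfl⟩ := Finset.mem_image.mp h
      exact Finset.mem_image.mpr
        ⟨x, Finset.mem_univ x, orb_of_fixed π (Finset.mem_filter.mp hx).2⟩
    · obtain ⟨c, hc, rfl⟩ := Finset.mem_image.mp h
      have hcy : c.IsCycle := (mem_cycleFactorsFinset_iff.mp hc).1
      obtain ⟨a, ha⟩ : c.support.Nonempty :=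
        Finset.card_pos.mp (lt_of_lt_of_le two_pos hcy.two_le_card_support)
      have hc' : c = π.cycleOf a := cycle_is_cycleOf ha hc
      have has : a ∈ π.support := mem_cycleFactorsFinset_support_le hc ha
      exact Finset.mem_image.mpr
        ⟨a, Finset.mem_univ a, by rw [orb_of_mem_support π has, ← hc']⟩
  have hdisj : Disjoint (Fx.image fun x => ({x} : Finset α))
      (π.cycleFactorsFinset.image fun c => c.support) := by
    rw [Finset.disjoint_left]
    intro O h1 h2
    obtain ⟨x, _, rfl⟩ := Finset.mem_image.mp h1
    obtain ⟨c, hc, hcs⟩ := Finset.mem_image.mp h2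
    have hcy : c.IsCycle := (mem_cycleFactorsFinset_iff.mp hc).1
    have := hcy.two_le_card_support
    rw [hcs, Finset.card_singleton] at this
    omega
  have hcard1 : (Fx.image fun x => ({x} : Finset α)).card = Fx.card :=
    Finset.card_image_of_injective _ fun x y hxy => Finset.singleton_injective hxy
  have hcard2 : (π.cycleFactorsFinset.image fun c => c.support).card
      = π.cycleFactorsFinset.card := by
    apply Finset.card_image_of_injOn
    intro c hc d hd hcd
    by_contra hne
    have hdisj' : Equiv.Perm.Disjoint c d :=
      (cycleFactorsFinset_pairwise_disjoint π) hc hd hne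
    have hsupp : _root_.Disjoint c.support d.support :=
      Equiv.Perm.Disjoint.disjoint_support hdisj'
    simp only at hcd
    rw [hcd, disjoint_self] at hsupp
    have hcy : d.IsCycle := (mem_cycleFactorsFinset_iff.mp (Finset.mem_coe.mp hd)).1
    have := hcy.two_le_card_support
    rw [hsupp] at this
    simp [Finset.bot_eq_empty] at this
  calc Fx.card + π.cycleFactorsFinset.card
      = ((Fx.image fun x => ({x} : Finset α)) ∪
        (π.cycleFactorsFinset.image fun c => c.support)).card := by
        rw [Finset.card_union_of_disjoint hdisj, hcard1, hcard2]
    _ ≤ (Finset.univ.image (orb π)).card := Finset.card_le_card hsub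



lemma inducedOnSets_val {k m : ℕ} (π : Equiv.Perm (Fin m))
    (A : {A : Finset (Fin m) // A.card = k}) :
    ((inducedOnSets k π) A).val = A.val.image π := by
  simp [inducedOnSets, Equiv.subtypeEquiv, Finset.map_eq_image]

lemma inducedOnSets_pow_val {k m : ℕ} (π : Equiv.Perm (Fin m)) (n : ℕ)
    (A : {A : Finset (Fin m) // A.card = k}) :
    (((inducedOnSets k π) ^ n) A).val = A.val.image ⇑(π ^ n) := by
  induction n generalizing A with
  | zero => simp
  | succ n ih =>
    rw [pow_succ, Equiv.Perm.mul_apply, ih (inducedOnSets k π A), inducedOnSets_val,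
      Finset.image_image, pow_succ π]
    congr 1

lemma exists_bound {m : ℕ} (π : Equiv.Perm (Fin m)) :
    ∃ M : ℕ, 1 ≤ M ∧ m ≤ M * numCycles π ∧
      (M = 1 ∨ ∃ c ∈ π.cycleFactorsFinset, c.support.card = M) := by
  classical
  have hsum : π.cycleType.sum = π.support.card := sum_cycleType π
  have hsupp_le : π.support.card ≤ m := by
    simpa using Finset.card_le_univ π.support
  have hnum : numCycles π = (m - π.support.card) + Multiset.card π.cycleType := by
    rw [numCycles, Fintype.card_fin]
  rcases π.cycleFactorsFinset.eq_empty_or_nonempty with he | hne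
  · refine ⟨1, le_rfl, ?_, Or.inl rfl⟩
    have h0 : π.cycleType = 0 := by rw [cycleType_def, he]; rfl
    have hs0 : π.support.card = 0 := by rw [← hsum, h0]; rfl
    rw [hnum, h0, hs0]
    simp
  · obtain ⟨c, hc, hmax⟩ := Finset.exists_max_image π.cycleFactorsFinset
      (fun d => d.support.card) hne
    have hcy : c.IsCycle := (mem_cycleFactorsFinset_iff.mp hc).1
    set M := c.support.card with hM
    have hM1 : 1 ≤ M := le_trans one_le_two hcy.two_le_card_support
    refine ⟨M, hM1, ?_, Or.inr ⟨c, hc, rfl⟩⟩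
    have hentry : ∀ x ∈ π.cycleType, x ≤ M := by
      intro x hx
      rw [cycleType_def] at hx
      obtain ⟨d, hd, rfl⟩ := Multiset.mem_map.mp hx
      exact hmax d hd
    have hsumle : π.cycleType.sum ≤ Multiset.card π.cycleType * M := by
      have := Multiset.sum_le_card_nsmul π.cycleType M hentry
      simpa [smul_eq_mul] using this
    calc m = (m - π.support.card) + π.support.card := (Nat.sub_add_cancel hsupp_le).symm
      _ ≤ (m - π.support.card) * M + Multiset.card π.cycleType * M := by
          refine Nat.add_le_add (Nat.le_mul_of_pos_right _ hM1) ?_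
          rw [← hsum]; exact hsumle
      _ = M * numCycles π := by rw [hnum, ← Nat.add_mul, Nat.mul_comm]

lemma caseL {k m : ℕ} (π : Equiv.Perm (Fin m)) {c : Equiv.Perm (Fin m)}
    (hc : c ∈ π.cycleFactorsFinset) :
    (c.support.card).choose k ≤ c.support.card * numCycles (inducedOnSets k π) := by
  classical
  set L := c.support.card with hL
  have hcy : c.IsCycle := (mem_cycleFactorsFinset_iff.mp hc).1
  have hL1 : 1 ≤ L := le_trans one_le_two hcy.two_le_card_support
  have hfix : ∀ a ∈ c.support, (π ^ L) a = a := by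
    intro a ha
    have hc' : c = π.cycleOf a := cycle_is_cycleOf ha hc
    have h1 : (π.cycleOf a ^ L) a = (π ^ L) a := cycleOf_pow_apply_self π a L
    rw [← h1, ← hc']
    have h2 : c ^ L = 1 := by rw [hL, ← hcy.orderOf]; exact pow_orderOf_eq_one c
    rw [h2]; rfl
  set σ := inducedOnSets k π with hσ
  have hsub : (Finset.univ.filter
        fun A : {A : Finset (Fin m) // A.card = k} => A.val ⊆ c.support)
      ⊆ (Finset.univ.filter fun A => (σ ^ L) A = A) := by
    intro A hA
    have hAs : A.val ⊆ c.support := (Finset.mem_filter.mp hA).2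
    refine Finset.mem_filter.mpr ⟨Finset.mem_univ _, ?_⟩
    apply Subtype.ext
    rw [inducedOnSets_pow_val]
    calc A.val.image ⇑(π ^ L) = A.val.image id :=
          Finset.image_congr (fun x hx => hfix x (hAs hx))
      _ = A.val := Finset.image_id
  have hcount : (Finset.univ.filter
      fun A : {A : Finset (Fin m) // A.card = k} => A.val ⊆ c.support).card
      = L.choose k := by
    rw [← Finset.card_powersetCard k c.support]
    apply Finset.card_bij (fun A _ => A.val)
    · intro A hA
      exact Finset.mem_powersetCard.mpr ⟨(Finset.mem_filter.mp hA).2, A.prop⟩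
    · intro A _ B _ h
      exact Subtype.ext h
    · intro t ht
      obtain ⟨ht1, ht2⟩ := Finset.mem_powersetCard.mp ht
      exact ⟨⟨t, ht2⟩, Finset.mem_filter.mpr ⟨Finset.mem_univ _, ht1⟩, rfl⟩
  calc L.choose k
      = (Finset.univ.filter
          fun A : {A : Finset (Fin m) // A.card = k} => A.val ⊆ c.support).card := hcount.symm
    _ ≤ (Finset.univ.filter fun A => (σ ^ L) A = A).card := Finset.card_le_card hsub
    _ ≤ L * numCycles σ := fix_pow_le σ L hL1

lemma caseR {k m : ℕ} (hm : 0 < m) (π : Equiv.Perm (Fin m)) :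
    (numCycles π).choose k ≤ numCycles (inducedOnSets k π) := by
  classical
  set σ := inducedOnSets k π with hσ
  set hfun : {A : Finset (Fin m) // A.card = k} → Finset (Finset (Fin m)) :=
    fun A => A.val.image (orb π) with hhfun
  have hinv : ∀ A, hfun (σ A) = hfun A := by
    intro A
    rw [hhfun]
    simp only
    rw [hσ, inducedOnSets_val, Finset.image_image]
    exact Finset.image_congr fun x _ => orb_apply π x
  have hmain := invariant_image_le σ hfun hinv
  refine le_trans ?_ hmain
  refine le_trans (Nat.choose_le_choose k (numCycles_le_card_image_orb π)) ?_
  rw [← Finset.card_powersetCard k (Finset.univ.image (orb π))]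
  apply Finset.card_le_card
  intro S hS
  obtain ⟨hS1, hS2⟩ := Finset.mem_powersetCard.mp hS
  set rep : Finset (Fin m) → Fin m :=
    fun O => if hO : O.Nonempty then hO.choose else ⟨0, hm⟩ with hrepdef
  have hrep : ∀ O ∈ S, rep O ∈ O ∧ orb π (rep O) = O := by
    intro O hO
    obtain ⟨a, _, rfl⟩ := Finset.mem_image.mp (hS1 hO)
    have hne : (orb π a).Nonempty := ⟨a, mem_orb_self π a⟩
    have h1 : rep (orb π a) ∈ orb π a := by
      rw [hrepdef]; simp only [dif_pos hne]; exact hne.choose_spec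
    exact ⟨h1, orb_eq_of_mem π h1⟩
  have hcard : (S.image rep).card = k := by
    rw [Finset.card_image_of_injOn, hS2]
    intro O hO O' hO' h
    rw [← (hrep O hO).2, ← (hrep O' hO').2, h]
  refine Finset.mem_image.mpr ⟨⟨S.image rep, hcard⟩, Finset.mem_univ _, ?_⟩
  rw [hhfun]
  simp only
  rw [Finset.image_image]
  calc S.image (orb π ∘ rep) = S.image id :=
        Finset.image_congr (fun O hO => (hrep O hO).2)
    _ = S := Finset.image_id

lemma desc_ge {n j : ℕ} (h1 : 1 ≤ j) (h : j ≤ n) : n + 1 - j ≤ n.descFactorial j := by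
  obtain ⟨i, rfl⟩ : ∃ i, j = i + 1 := ⟨j - 1, by omega⟩
  rw [Nat.descFactorial_succ]
  have hpos : 0 < n.descFactorial i := by
    apply Nat.pos_of_ne_zero
    rw [Ne, Nat.descFactorial_eq_zero_iff_lt]
    omega
  calc n + 1 - (i + 1) = (n - i) * 1 := by omega
    _ ≤ (n - i) * n.descFactorial i := Nat.mul_le_mul_left _ hpos

lemma choose_ge {k n : ℕ} (hk : 1 ≤ k) (h : k ≤ n) : n + 1 - k ≤ n.choose k := by
  obtain ⟨j, rfl⟩ : ∃ j, k = j + 1 := ⟨k - 1, by omega⟩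
  induction n, h using Nat.le_induction with
  | base => simp
  | succ n hn ih =>
    have h1 : 0 < n.choose j := Nat.choose_pos (by omega)
    have h2 : (n+1).choose (j+1) = n.choose j + n.choose (j+1) := Nat.choose_succ_succ n j
    omega


lemma sq_gt {a b mm : ℕ} (h1 : 4 * a ^ 2 < mm) (h2 : mm ≤ b * b) : 2 * a < b := by
  by_contra hcon
  push_neg at hcon
  have h3 : b * b ≤ (2*a) * (2*a) := Nat.mul_le_mul hcon hcon
  have h4 : (2*a) * (2*a) = 4 * a ^ 2 := by ring
  linarith

set_option maxHeartbeats 1000000 in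
theorem stmt_18 (k : ℕ) (hk : 2 ≤ k) :
    ∃ c : ℝ, 0 < c ∧ ∀ m : ℕ, k ≤ m → ∀ π : Equiv.Perm (Fin m), π ≠ 1 →
      c * Real.sqrt m ≤ (numCycles (inducedOnSets k π) : ℝ) := by
  classical
  have hfpos : 0 < ((Nat.factorial k) : ℝ) := by exact_mod_cast Nat.factorial_pos k
  have hkpos : (0:ℝ) < k := by exact_mod_cast lt_of_lt_of_le two_pos hk
  refine ⟨1 / (2 * k * (Nat.factorial k)), by positivity, ?_⟩
  intro m hkm π _
  set σ := inducedOnSets k π with hσ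
  set N := numCycles σ with hN
  -- N ≥ 1
  obtain ⟨A0, _, hA0⟩ := Finset.exists_subset_card_eq
    (s := (Finset.univ : Finset (Fin m))) (n := k) (by simpa using hkm)
  have h1 : 1 ≤ N := by
    have hle := invariant_image_le σ (fun _ => (0:ℕ)) (fun _ => rfl)
    have huniv : (Finset.univ : Finset {A : Finset (Fin m) // A.card = k}).Nonempty :=
      ⟨⟨A0, hA0⟩, Finset.mem_univ _⟩
    rwa [Finset.image_const huniv 0, Finset.card_singleton] at hle
  have hNR : (1:ℝ) ≤ N := by exact_mod_cast h1
  have hKR : (2:ℝ) ≤ k := by exact_mod_cast hk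
  have hFR : (1:ℝ) ≤ (Nat.factorial k) := by exact_mod_cast Nat.one_le_iff_ne_zero.mpr (Nat.factorial_ne_zero k)
  have hcpos : (0:ℝ) < 2 * k * (Nat.factorial k) := by positivity
  by_cases hsm : m ≤ 4 * k ^ 2
  · -- small case
    have hs1 : Real.sqrt m ≤ 2 * k := by
      have : (m:ℝ) ≤ ((2:ℝ) * k) ^ 2 := by
        have hsm' : (m:ℝ) ≤ 4 * (k:ℝ)^2 := by exact_mod_cast hsm
        nlinarith [hsm']
      calc Real.sqrt m ≤ Real.sqrt (((2:ℝ) * k) ^ 2) := Real.sqrt_le_sqrt this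
        _ = 2 * k := Real.sqrt_sq (by positivity)
    calc 1 / (2 * k * (Nat.factorial k)) * Real.sqrt m ≤ 1 / (2 * (k:ℝ) * (Nat.factorial k)) * (2 * k) := by
          apply mul_le_mul_of_nonneg_left hs1; positivity
      _ = 1 / ((Nat.factorial k) : ℝ) := by field_simp
      _ ≤ 1 := by rw [div_le_one hfpos]; exact hFR
      _ ≤ N := hNR
  · -- big case : m > 4k²
    push_neg at hsm
    obtain ⟨M, hM1, hMb, hMor⟩ := exists_bound π
    set r := numCycles π with hr
    -- produce Q with m ≤ Q*Q and Q + 1 ≤ k! * N + k and 2*k < Q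
    have hmain : ∃ Q : ℕ, m ≤ Q * Q ∧ Q + 1 ≤ (Nat.factorial k) * N + k ∧ 2 * k < Q := by
      by_cases hMr : M ≤ r
      · have hmr : m ≤ r * r := le_trans hMb (Nat.mul_le_mul_right _ hMr)
        have hrk : 2 * k < r := sq_gt hsm hmr
        refine ⟨r, hmr, ?_, hrk⟩
        have hchoose : r + 1 - k ≤ r.choose k := choose_ge (by omega) (by omega)
        have hcr : r.choose k ≤ N := caseR (by omega) π
        have hfk : 1 ≤ (Nat.factorial k) := Nat.one_le_iff_ne_zero.mpr (Nat.factorial_ne_zero k)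
        have : N ≤ (Nat.factorial k) * N := Nat.le_mul_of_pos_left _ hfk
        omega
      · push_neg at hMr
        have hmM : m ≤ M * M := le_trans hMb (Nat.mul_le_mul_left _ (le_of_lt hMr))
        have hMk : 2 * k < M := sq_gt hsm hmM
        obtain ⟨c, hc, hcM⟩ : ∃ c ∈ π.cycleFactorsFinset, c.support.card = M := by
          rcases hMor with h | h
          · omega
          · exact h
        refine ⟨M, hmM, ?_, hMk⟩
        have hcL := caseL (k := k) π hc
        rw [hcM] at hcL
        -- k! * (M.choose k) = M.descFactorial k ≥ M * (M+1-k)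
        have hdesc : M * (M + 1 - k) ≤ M.descFactorial k := by
          obtain ⟨n, rfl⟩ : ∃ n, M = n + 1 := ⟨M - 1, by omega⟩
          obtain ⟨j, rfl⟩ : ∃ j, k = j + 1 := ⟨k - 1, by omega⟩
          rw [Nat.succ_descFactorial_succ]
          have := desc_ge (n := n) (j := j) (by omega) (by omega)
          calc (n+1) * (n + 1 + 1 - (j+1)) = (n+1) * (n + 1 - j) := by
                have he : n + 1 + 1 - (j+1) = n + 1 - j := by omega
                rw [he]
            _ ≤ (n+1) * n.descFactorial j := Nat.mul_le_mul_left _ this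
        have heq : M.descFactorial k = (Nat.factorial k) * M.choose k := Nat.descFactorial_eq_factorial_mul_choose M k
        have hchain : M * (M + 1 - k) ≤ M * ((Nat.factorial k) * N) := by
          calc M * (M + 1 - k) ≤ M.descFactorial k := hdesc
            _ = (Nat.factorial k) * M.choose k := heq
            _ ≤ (Nat.factorial k) * (M * N) := Nat.mul_le_mul_left _ hcL
            _ = M * ((Nat.factorial k) * N) := by ring
        have hfinal : M + 1 - k ≤ (Nat.factorial k) * N := Nat.le_of_mul_le_mul_left hchain (by omega)
        omega
    obtain ⟨Q, hQm, hQN, hQk⟩ := hmain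
    have hsq : Real.sqrt m ≤ Q := by
      have hQ2 : (m:ℝ) ≤ (Q:ℝ) * Q := by exact_mod_cast hQm
      calc Real.sqrt m ≤ Real.sqrt ((Q:ℝ) * Q) := Real.sqrt_le_sqrt hQ2
        _ = Q := Real.sqrt_mul_self (by positivity)
    have hQNR : (Q:ℝ) + 1 ≤ ((Nat.factorial k) : ℝ) * N + k := by exact_mod_cast hQN
    have hQkR : 2 * (k:ℝ) < Q := by exact_mod_cast hQk
    calc (1 / (2 * (k:ℝ) * (Nat.factorial k))) * Real.sqrt m ≤ (1 / (2 * (k:ℝ) * (Nat.factorial k))) * Q := by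
          apply mul_le_mul_of_nonneg_left hsq; positivity
      _ ≤ N := by
          rw [one_div, inv_mul_le_iff₀ hcpos]
          nlinarith [mul_le_mul_of_nonneg_left hQNR (by positivity : (0:ℝ) ≤ 2 * (k:ℝ)),
            mul_pos hkpos hfpos, hNR, hKR, hFR]
end

section
/- Let r ≥ 2 and let g = (π_1,…,π_r; σ) be an element of the wreath product S_m ≀ S_r acting on {1,…,m}^r by g·(x_1,…,x_r) = (π_1 x_{σ^{-1}(1)},…,π_r x_{σ^{-1}(r)}). If σ ≠ 1, then g has at least m/r cycles in its action on {1,…,m}^r. -/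
/-- The element `(π 1, …, π r; σ)` of the wreath product `S_m ≀ S_r` acting on
`(Fin m) ^ r` by `(g • x) i = π i (x (σ⁻¹ i))`. -/
def wreathPerm {m r : ℕ} (π : Fin r → Equiv.Perm (Fin m)) (σ : Equiv.Perm (Fin r)) :
    Equiv.Perm (Fin r → Fin m) where
  toFun := fun x i => π i (x (σ⁻¹ i))
  invFun := fun x i => (π (σ i))⁻¹ (x (σ i))
  left_inv := by intro x; funext i; simp
  right_inv := by intro x; funext i; simp

namespace Stmt19Aux

variable {m r : ℕ}

/-- The accumulated twist: `(G^n x) j = twist π σ n j (x ((σ⁻¹)^n j))`. -/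
def twist (π : Fin r → Equiv.Perm (Fin m)) (σ : Equiv.Perm (Fin r)) :
    ℕ → Fin r → Equiv.Perm (Fin m)
  | 0, _ => 1
  | n + 1, j => π j * twist π σ n (σ⁻¹ j)

lemma wreathPerm_apply (π : Fin r → Equiv.Perm (Fin m)) (σ : Equiv.Perm (Fin r))
    (x : Fin r → Fin m) (j : Fin r) : wreathPerm π σ x j = π j (x (σ⁻¹ j)) := rfl

lemma pow_apply (π : Fin r → Equiv.Perm (Fin m)) (σ : Equiv.Perm (Fin r)) :
    ∀ (n : ℕ) (x : Fin r → Fin m) (j : Fin r),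
      (wreathPerm π σ ^ n) x j = twist π σ n j (x (((σ⁻¹) ^ n) j)) := by
  intro n
  induction n with
  | zero => intro x j; simp [twist]
  | succ k ih =>
    intro x j
    rw [pow_succ']
    have h1 : (wreathPerm π σ * wreathPerm π σ ^ k) x = wreathPerm π σ ((wreathPerm π σ ^ k) x) :=
      rfl
    rw [h1, wreathPerm_apply, ih]
    have h2 : ((σ⁻¹ : Equiv.Perm (Fin r)) ^ k) (σ⁻¹ j) = ((σ⁻¹) ^ (k + 1)) j := by
      rw [pow_succ]; rfl
    rw [h2]
    rfl

lemma twist_succ' (π : Fin r → Equiv.Perm (Fin m)) (σ : Equiv.Perm (Fin r)) :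
    ∀ (n : ℕ) (j : Fin r),
      twist π σ (n + 1) j = twist π σ n j * π (((σ⁻¹) ^ n) j) := by
  intro n
  induction n with
  | zero => intro j; simp [twist]
  | succ k ih =>
    intro j
    have h1 : twist π σ (k + 2) j = π j * twist π σ (k + 1) (σ⁻¹ j) := rfl
    have h2 : twist π σ (k + 1) j = π j * twist π σ k (σ⁻¹ j) := rfl
    rw [h1, ih (σ⁻¹ j), h2, mul_assoc]
    congr 2

lemma zpow_apply_of_semiconj {α β : Type*} (K : Equiv.Perm α) (t : Equiv.Perm β) (f : α → β)
    (h : ∀ x, f (K x) = t (f x)) : ∀ (n : ℤ) (x : α), f ((K ^ n) x) = (t ^ n) (f x) := by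
  have hnat : ∀ (M : Equiv.Perm α) (u : Equiv.Perm β), (∀ x, f (M x) = u (f x)) →
      ∀ (n : ℕ) (x : α), f ((M ^ n) x) = (u ^ n) (f x) := by
    intro M u hMu n
    induction n with
    | zero => intro x; simp
    | succ k ih =>
      intro x
      rw [pow_succ, pow_succ, Equiv.Perm.mul_apply, ih, hMu, Equiv.Perm.mul_apply]
  have hinv : ∀ x, f (K⁻¹ x) = t⁻¹ (f x) := by
    intro x
    have h1 := h (K⁻¹ x)
    rw [show K (K⁻¹ x) = x from Equiv.apply_symm_apply K x] at h1
    rw [h1, show t⁻¹ (t (f (K⁻¹ x))) = f (K⁻¹ x) from Equiv.symm_apply_apply t _]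
  intro n x
  cases n with
  | ofNat k =>
    have h1 : K ^ (Int.ofNat k) = K ^ k := zpow_natCast K k
    have h2 : t ^ (Int.ofNat k) = t ^ k := zpow_natCast t k
    rw [h1, h2]; exact hnat K t h k x
  | negSucc k =>
    have h1 : K ^ (Int.negSucc k) = (K⁻¹) ^ (k + 1) := by rw [zpow_negSucc, inv_pow]
    have h2 : t ^ (Int.negSucc k) = (t⁻¹) ^ (k + 1) := by rw [zpow_negSucc, inv_pow]
    rw [h1, h2]; exact hnat K⁻¹ t⁻¹ hinv (k + 1) x

end Stmt19Aux

theorem stmt_19 (m r : ℕ) (hr : 2 ≤ r) (π : Fin r → Equiv.Perm (Fin m))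
    (σ : Equiv.Perm (Fin r)) (hσ : σ ≠ 1) :
    (m : ℝ) / r ≤ (numCycles (wreathPerm π σ) : ℝ) := by
  classical
  obtain ⟨i, hi⟩ : ∃ j, σ j ≠ j := by
    by_contra h
    push_neg at h
    exact hσ (Equiv.ext fun j => (h j).trans rfl)
  set G : Equiv.Perm (Fin r → Fin m) := wreathPerm π σ with hGdef
  set ℓ : ℕ := Function.minimalPeriod σ i with hldef
  have hper : i ∈ Function.periodicPts σ := by
    refine ⟨orderOf σ, orderOf_pos σ, ?_⟩
    show (⇑σ)^[orderOf σ] i = i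
    rw [← Equiv.Perm.coe_pow, pow_orderOf_eq_one]
    rfl
  have hl0 : 0 < ℓ := Function.minimalPeriod_pos_of_mem_periodicPts hper
  have hpow : (σ ^ ℓ) i = i := by
    rw [Equiv.Perm.coe_pow]
    exact Function.iterate_minimalPeriod
  have hinvpow : ((σ⁻¹) ^ ℓ) i = i := by
    have h2 := congrArg (⇑(σ ^ ℓ)⁻¹) hpow
    rw [show (σ ^ ℓ)⁻¹ ((σ ^ ℓ) i) = i from Equiv.symm_apply_apply _ _] at h2
    rw [inv_pow]
    exact h2.symm
  have hinvpow' : ((σ⁻¹) ^ ℓ) (σ i) = σ i := by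
    have hc : ((σ⁻¹ : Equiv.Perm (Fin r)) ^ ℓ) * σ = σ * ((σ⁻¹) ^ ℓ) :=
      ((Commute.refl σ).inv_right.pow_right ℓ).symm.eq
    calc ((σ⁻¹) ^ ℓ) (σ i) = (((σ⁻¹) ^ ℓ) * σ) i := rfl
      _ = (σ * ((σ⁻¹) ^ ℓ)) i := by rw [hc]
      _ = σ (((σ⁻¹) ^ ℓ) i) := rfl
      _ = σ i := by rw [hinvpow]
  have hl_le : ℓ ≤ r := by
    have hinj : Set.InjOn (fun k => (⇑σ)^[k] i) (Set.Iio ℓ) :=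
      Function.iterate_injOn_Iio_minimalPeriod
    have hcard := Finset.card_le_card_of_injOn (fun k => (⇑σ)^[k] i)
      (fun a _ => Finset.mem_univ ((⇑σ)^[a] i)) (s := Finset.range ℓ)
      (by rw [Finset.coe_range]; exact hinj)
    simpa using hcard
  -- the twists
  set τ : Equiv.Perm (Fin m) := Stmt19Aux.twist π σ ℓ i with hτdef
  set τ' : Equiv.Perm (Fin m) := Stmt19Aux.twist π σ ℓ (σ i) with hτ'def
  set s : Equiv.Perm (Fin m) := π (σ i) with hsdef
  have hK0 : ∀ x : Fin r → Fin m, (G ^ ℓ) x i = τ (x i) := fun x => by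
    rw [hGdef, Stmt19Aux.pow_apply, hinvpow]
  have hK1 : ∀ x : Fin r → Fin m, (G ^ ℓ) x (σ i) = τ' (x (σ i)) := fun x => by
    rw [hGdef, Stmt19Aux.pow_apply, hinvpow']
  have hconj : τ' = s * τ * s⁻¹ := by
    obtain ⟨k, hk⟩ : ∃ k, ℓ = k + 1 := ⟨ℓ - 1, (Nat.succ_pred_eq_of_pos hl0).symm⟩
    have h1 : τ' = s * Stmt19Aux.twist π σ k i := by
      rw [hτ'def, hk]
      show π (σ i) * Stmt19Aux.twist π σ k (σ⁻¹ (σ i)) = _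
      rw [show σ⁻¹ (σ i) = i from Equiv.symm_apply_apply σ i, hsdef]
    have hki : ((σ⁻¹ : Equiv.Perm (Fin r)) ^ k) i = σ i := by
      have h3 : ((σ⁻¹ : Equiv.Perm (Fin r)) ^ (k + 1)) i = i := hk ▸ hinvpow
      calc ((σ⁻¹) ^ k) i = σ (σ⁻¹ (((σ⁻¹) ^ k) i)) := (Equiv.apply_symm_apply σ _).symm
        _ = σ (((σ⁻¹) ^ (k + 1)) i) := by rw [pow_succ']; rfl
        _ = σ i := by rw [h3]
    have h2 : τ = Stmt19Aux.twist π σ k i * s := by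
      rw [hτdef, hk, Stmt19Aux.twist_succ', hki, hsdef]
    rw [h1, h2]
    group
  -- canonical representatives of τ-orbits
  letI st : Setoid (Fin m) := ⟨τ.SameCycle, Equiv.Perm.SameCycle.equivalence τ⟩
  let rep : Fin m → Fin m := fun a => (Quotient.mk st a).out
  have hrep1 : ∀ a, τ.SameCycle a (rep a) := fun a => Setoid.symm (Quotient.mk_out a)
  have hrep2 : ∀ a b, τ.SameCycle a b → rep a = rep b := fun a b h => by
    show (Quotient.mk st a).out = (Quotient.mk st b).out
    rw [Quotient.sound (s := st) h]
  have hfix : ∀ (a b : Fin m) (n : ℤ), τ.SameCycle a b → (τ ^ n) a = a → (τ ^ n) b = b := by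
    intro a b n hab hfa
    obtain ⟨u, hu⟩ := hab
    have hcomm : (τ ^ n) ((τ ^ u) a) = (τ ^ u) ((τ ^ n) a) := by
      rw [← Equiv.Perm.mul_apply, ← Equiv.Perm.mul_apply, ← zpow_add, ← zpow_add, add_comm]
    rw [← hu, hcomm, hfa, hu]
  -- the test points
  let P : Fin m → (Fin r → Fin m) := fun a j =>
    if j = i then rep a else if j = σ i then s a else a
  have hPi : ∀ a, P a i = rep a := fun a => by simp [P]
  have hPsi : ∀ a, P a (σ i) = s a := fun a => by simp [P, hi]
  -- the key injectivity
  have key : ∀ a b : Fin m, (∃ t : ℤ, P a = ((G ^ ℓ) ^ t) (P b)) → a = b := by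
    rintro a b ⟨t, ht⟩
    have e1 : rep a = (τ ^ t) (rep b) := by
      have h0 := congrFun ht i
      rw [hPi] at h0
      have h1 := Stmt19Aux.zpow_apply_of_semiconj (G ^ ℓ) τ (fun x => x i) hK0 t (P b)
      rw [h0, h1, hPi]
    have e2 : a = (τ ^ t) b := by
      have h0 := congrFun ht (σ i)
      rw [hPsi] at h0
      have h1 := Stmt19Aux.zpow_apply_of_semiconj (G ^ ℓ) τ' (fun x => x (σ i)) hK1 t (P b)
      rw [h1, hPsi] at h0
      have h2 : τ' ^ t = s * τ ^ t * s⁻¹ := by rw [hconj, conj_zpow]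
      rw [h2] at h0
      have h3 : s a = s ((τ ^ t) b) := by
        rw [h0]
        simp [Equiv.Perm.mul_apply]
      exact s.injective h3
    have hab : τ.SameCycle a b := by
      refine (hrep1 a).trans (Equiv.Perm.SameCycle.trans ?_ (hrep1 b).symm)
      exact Equiv.Perm.SameCycle.symm ⟨t, e1.symm⟩
    have hre : rep a = rep b := hrep2 a b hab
    have hfixrep : (τ ^ t) (rep b) = rep b := by rw [← e1, hre]
    have hfixb : (τ ^ t) b = b := hfix (rep b) b t (hrep1 b).symm hfixrep
    rw [e2, hfixb]
  -- the classifying map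
  let F : Fin m → ((Fin r → Fin m) ⊕ Equiv.Perm (Fin r → Fin m)) := fun a =>
    if G (P a) = P a then Sum.inl (P a) else Sum.inr (G.cycleOf (P a))
  have hsc : ∀ a b, F a = F b → G.SameCycle (P a) (P b) := by
    intro a b hab
    by_cases ha : G (P a) = P a <;> by_cases hb : G (P b) = P b <;>
      simp only [F, ha, hb, if_pos, if_neg, if_true, if_false] at hab
    · rw [Sum.inl.injEq] at hab
      rw [hab]
    · exact absurd hab (by simp)
    · exact absurd hab (by simp)
    · rw [Sum.inr.injEq] at hab
      have h1 : P b ∈ (G.cycleOf (P a)).support := by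
        rw [hab, Equiv.Perm.mem_support_cycleOf_iff]
        exact ⟨Equiv.Perm.SameCycle.refl _ _, Equiv.Perm.mem_support.2 hb⟩
      exact (Equiv.Perm.mem_support_cycleOf_iff.1 h1).1
  -- fibers of F have at most ℓ elements
  have hfiber : ∀ c ∈ Finset.univ.image F,
      (Finset.univ.filter (fun a => F a = c)).card ≤ ℓ := by
    intro c hc
    obtain ⟨b₀, -, hb₀⟩ := Finset.mem_image.1 hc
    have hW : ∀ a ∈ Finset.univ.filter (fun a => F a = c), G.SameCycle (P a) (P b₀) := by
      intro a ha
      exact hsc a b₀ (((Finset.mem_filter.1 ha).2).trans hb₀.symm)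
    let nn : Fin m → ℤ := fun a => if h : G.SameCycle (P a) (P b₀) then h.choose else 0
    have hnn : ∀ a, G.SameCycle (P a) (P b₀) → (G ^ (nn a)) (P a) = P b₀ := by
      intro a h
      simp only [nn, dif_pos h]
      exact h.choose_spec
    have hcard : (Finset.univ.filter (fun a => F a = c)).card ≤ (Finset.range ℓ).card := by
      apply Finset.card_le_card_of_injOn (fun a => ((nn a) % (ℓ : ℤ)).toNat)
      · intro a _
        simp only [Finset.mem_range]
        have h1 : 0 ≤ (nn a) % (ℓ : ℤ) := Int.emod_nonneg _ (by exact_mod_cast hl0.ne')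
        have h2 : (nn a) % (ℓ : ℤ) < (ℓ : ℤ) := Int.emod_lt_of_pos _ (by exact_mod_cast hl0)
        exact Finset.mem_coe.2 (Finset.mem_range.2 ((Int.toNat_lt h1).2 h2))
      · intro a ha b hb hab
        simp only [Finset.mem_coe] at ha hb
        have hsa := hW a ha
        have hsb := hW b hb
        have hna := hnn a hsa
        have hnb := hnn b hsb
        have h1 : 0 ≤ (nn a) % (ℓ : ℤ) := Int.emod_nonneg _ (by exact_mod_cast hl0.ne')
        have h2 : 0 ≤ (nn b) % (ℓ : ℤ) := Int.emod_nonneg _ (by exact_mod_cast hl0.ne')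
        have hmod : (nn a) % (ℓ : ℤ) = (nn b) % (ℓ : ℤ) := by
          simp only at hab
          omega
        have hdvd : (ℓ : ℤ) ∣ (nn b - nn a) := Int.ModEq.dvd hmod
        obtain ⟨t, ht⟩ := hdvd
        apply key a b
        refine ⟨t, ?_⟩
        have hGa : (G ^ (nn b - nn a)) (P b) = P a := by
          have heq : (G ^ (nn b)) (P b) = (G ^ (nn a)) (P a) := by rw [hna, hnb]
          calc (G ^ (nn b - nn a)) (P b)
              = (G ^ (-(nn a)) * G ^ (nn b)) (P b) := by
                rw [← zpow_add]; ring_nf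
            _ = (G ^ (-(nn a))) ((G ^ (nn b)) (P b)) := rfl
            _ = (G ^ (-(nn a))) ((G ^ (nn a)) (P a)) := by rw [heq]
            _ = (G ^ (-(nn a)) * G ^ (nn a)) (P a) := rfl
            _ = P a := by rw [← zpow_add]; simp
        rw [← hGa, ht]
        rw [zpow_mul]
        norm_cast
    simpa using hcard
  -- counting
  have hcount : m ≤ ℓ * (Finset.univ.image F).card := by
    have h1 := Finset.card_le_mul_card_image (f := F) Finset.univ ℓ hfiber
    simpa using h1
  have himg : (Finset.univ.image F).card ≤ numCycles G := by
    have hsub : Finset.univ.image F ⊆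
        (G.supportᶜ.image Sum.inl) ∪ (G.cycleFactorsFinset.image Sum.inr) := by
      intro c hc
      obtain ⟨a, -, rfl⟩ := Finset.mem_image.1 hc
      by_cases ha : G (P a) = P a
      · apply Finset.mem_union_left
        refine Finset.mem_image.2 ⟨P a, ?_, by simp [F, ha]⟩
        simp [Equiv.Perm.mem_support, ha]
      · apply Finset.mem_union_right
        refine Finset.mem_image.2 ⟨G.cycleOf (P a), ?_, by simp [F, ha]⟩
        exact Equiv.Perm.cycleOf_mem_cycleFactorsFinset_iff.2 (Equiv.Perm.mem_support.2 ha)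
    calc (Finset.univ.image F).card
        ≤ ((G.supportᶜ.image Sum.inl) ∪ (G.cycleFactorsFinset.image Sum.inr)).card :=
          Finset.card_le_card hsub
      _ ≤ (G.supportᶜ.image Sum.inl).card + (G.cycleFactorsFinset.image Sum.inr).card :=
          Finset.card_union_le _ _
      _ = G.supportᶜ.card + G.cycleFactorsFinset.card := by
          rw [Finset.card_image_of_injective _ Sum.inl_injective,
            Finset.card_image_of_injective _ Sum.inr_injective]
      _ = numCycles G := by
          rw [Finset.card_compl]
          unfold numCycles
          congr 1
          rw [Equiv.Perm.cycleType_def, Multiset.card_map]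
          rfl
  have hfin : m ≤ r * numCycles G := by
    calc m ≤ ℓ * (Finset.univ.image F).card := hcount
      _ ≤ r * numCycles G := Nat.mul_le_mul hl_le himg
  have hr0 : (0 : ℝ) < r := by
    have : 0 < r := lt_of_lt_of_le (by norm_num) hr
    exact_mod_cast this
  rw [div_le_iff₀ hr0]
  calc (m : ℝ) ≤ ((r * numCycles G : ℕ) : ℝ) := by exact_mod_cast hfin
    _ = (numCycles G : ℝ) * r := by push_cast; ring
end
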